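/- Let ε ∈ ℝ, γ > 0, L ∈ ℝ and T > 0. Let v, w, φ : [0,T] → ℝ be differentiable and h : [0,T] → ℝ, with w(t) ≥ 0 and φ(t) ≥ 0 for all t ∈ [0,T]. Assume that for all t ∈ [0,T]: (i) v'(t) ≤ −ε v(t) − h(t)² + γ² w(t)², (ii) (w²)'(t) ≤ 2L w(t)² + 2 h(t) w(t), and (iii) φ'(t) = −2(L + ε/2) φ(t) − γ (φ(t)² + 1). Then the function u(t) := v(t) + γ φ(t) w(t)² satisfies u(t) ≤ e^{−εt} u(0) for all t ∈ [0,T]. (This is the flow-segment decrease estimate (12) for the hybrid Lyapunov function U(ξ) = Ṽ(x) + γ_ℓ φ_ℓ(τ) W̃²(ℓ,e,s) in Proposition 2.1, written along a single trajectory.) -/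

import Mathlib

/-- Flow-segment decrease estimate (12) for the hybrid Lyapunov function
`U(ξ) = Ṽ(x) + γ_ℓ φ_ℓ(τ) W̃²(ℓ,e,s)`, along a single trajectory: with
(i) `v' ≤ −εv − h² + γ²w²`, (ii) `(w²)' ≤ 2Lw² + 2hw` (here `(w²)' = 2ww'`), and
(iii) `φ' = −2(L+ε/2)φ − γ(φ²+1)` on `[0,T]`, the function `u = v + γφw²` satisfies
`u(t) ≤ e^{−εt} u(0)` on `[0,T]`. -/
theorem stmt_8 (ε γ L T : ℝ) (hγ : 0 < γ) (hT : 0 < T)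
    (v w φ h v' w' φ' : ℝ → ℝ)
    (hvd : ∀ t ∈ Set.Icc 0 T, HasDerivAt v (v' t) t)
    (hwd : ∀ t ∈ Set.Icc 0 T, HasDerivAt w (w' t) t)
    (hφd : ∀ t ∈ Set.Icc 0 T, HasDerivAt φ (φ' t) t)
    (hw0 : ∀ t ∈ Set.Icc 0 T, 0 ≤ w t)
    (hφ0 : ∀ t ∈ Set.Icc 0 T, 0 ≤ φ t)
    (hi : ∀ t ∈ Set.Icc 0 T, v' t ≤ -ε * v t - (h t) ^ 2 + γ ^ 2 * (w t) ^ 2)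
    (hii : ∀ t ∈ Set.Icc 0 T, 2 * w t * w' t ≤ 2 * L * (w t) ^ 2 + 2 * h t * w t)
    (hiii : ∀ t ∈ Set.Icc 0 T, φ' t = -2 * (L + ε / 2) * φ t - γ * ((φ t) ^ 2 + 1)) :
    ∀ t ∈ Set.Icc 0 T,
      v t + γ * φ t * (w t) ^ 2 ≤ Real.exp (-ε * t) * (v 0 + γ * φ 0 * (w 0) ^ 2) := by
  -- consider g t = exp(ε t) * u t; show it is antitone on [0,T]
  set g : ℝ → ℝ := fun t => Real.exp (ε * t) * (v t + γ * φ t * (w t) ^ 2) with hg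
  have hgd : ∀ t ∈ Set.Icc 0 T, HasDerivAt g
      (Real.exp (ε * t) * (ε * (v t + γ * φ t * (w t) ^ 2)
        + (v' t + γ * (φ' t * (w t) ^ 2 + φ t * (2 * w t * w' t))))) t := by
    intro t ht
    have he : HasDerivAt (fun t => Real.exp (ε * t)) (Real.exp (ε * t) * ε) t := by
      simpa using (HasDerivAt.exp ((hasDerivAt_id t).const_mul ε))
    have hu : HasDerivAt (fun t => v t + γ * φ t * (w t) ^ 2)
        (v' t + γ * (φ' t * (w t) ^ 2 + φ t * (2 * w t * w' t))) t := by
      have hsq : HasDerivAt (fun t => (w t) ^ 2) (2 * w t * w' t) t := by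
        have := (hwd t ht).fun_pow 2
        simpa [mul_comm, mul_left_comm, mul_assoc] using this
      have := ((hφd t ht).mul hsq).const_mul γ
      exact (hvd t ht).add (by simpa [mul_assoc] using this)
    have := he.fun_mul hu
    simpa [hg, mul_comm, mul_left_comm, mul_assoc, mul_add, add_mul] using this
  have hanti : AntitoneOn g (Set.Icc 0 T) := by
    apply antitoneOn_of_deriv_nonpos (convex_Icc 0 T)
    · exact fun t ht => ((hgd t ht).continuousAt).continuousWithinAt
    · intro t ht
      rw [interior_Icc] at ht
      exact ((hgd t (Set.mem_Icc_of_Ioo ht)).differentiableAt).differentiableWithinAt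
    · intro t ht
      rw [interior_Icc] at ht
      have ht' : t ∈ Set.Icc 0 T := Set.mem_Icc_of_Ioo ht
      rw [(hgd t ht').deriv]
      have hφ' := hiii t ht'
      have hiv := hi t ht'
      have hiiw := hii t ht'
      have hw := hw0 t ht'
      have hφ := hφ0 t ht'
      have hexp : 0 ≤ Real.exp (ε * t) := (Real.exp_pos _).le
      have key : ε * (v t + γ * φ t * (w t) ^ 2)
          + (v' t + γ * (φ' t * (w t) ^ 2 + φ t * (2 * w t * w' t))) ≤ 0 := by
        rw [hφ']
        nlinarith [sq_nonneg (h t - γ * φ t * w t), mul_le_mul_of_nonneg_left hiiw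
          (mul_nonneg hγ.le hφ), sq_nonneg (w t)]
      exact mul_nonpos_of_nonneg_of_nonpos hexp key
  intro t ht
  have h0 : (0 : ℝ) ∈ Set.Icc 0 T := Set.left_mem_Icc.2 hT.le
  have := hanti h0 ht ht.1
  simp only [hg, mul_zero, Real.exp_zero, one_mul] at this
  have hexp : 0 < Real.exp (ε * t) := Real.exp_pos _
  rw [show (-ε * t) = -(ε * t) by ring, Real.exp_neg]
  rw [inv_mul_eq_div, le_div_iff₀ hexp]
  linarith [this, mul_comm (Real.exp (ε * t)) (v t + γ * φ t * w t ^ 2)]
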